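/- The n-dimensional Hardy operator ℋ maps the atomic Hardy space H¹(ℝⁿ) boundedly into L¹(ℝⁿ): there exists C > 0 (one may take C = 2ⁿ) such that ‖ℋf‖_{L¹} ≤ C‖f‖_{H¹} for all f ∈ H¹(ℝⁿ). -/

import Mathlib

open MeasureTheory Metric

/-- Volume of the ball of radius `r` in `ℝⁿ`. -/
noncomputable def ballVol (n : ℕ) (r : ℝ) : ℝ :=
  (volume (ball (0 : EuclideanSpace ℝ (Fin n)) r)).toReal

/-- The `n`-dimensional Hardy operator
`ℋf(x) = (1/(vₙ |x|ⁿ)) ∫_{|y| < |x|} f(y) dy`. -/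
noncomputable def hardyOp (n : ℕ) (f : EuclideanSpace ℝ (Fin n) → ℝ)
    (x : EuclideanSpace ℝ (Fin n)) : ℝ :=
  (ballVol n 1 * ‖x‖ ^ n)⁻¹ * ∫ y in ball (0 : EuclideanSpace ℝ (Fin n)) ‖x‖, f y

/-- A `(1,∞,0)`-atom: supported in `B(x₀,r)`, bounded by `|B(x₀,r)|⁻¹`,
with vanishing integral. -/
def IsAtomInfZero (n : ℕ) (x₀ : EuclideanSpace ℝ (Fin n)) (r : ℝ)
    (a : EuclideanSpace ℝ (Fin n) → ℝ) : Prop :=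
  Measurable a ∧ (∀ x, x ∉ ball x₀ r → a x = 0) ∧
    (∀ x, |a x| ≤ ((volume (ball x₀ r)).toReal)⁻¹) ∧ (∫ x, a x) = 0

/-! ### Auxiliary material -/

section Aux

variable {n : ℕ}

/-- Ann annulus around the support ball of an atom. -/
def annS (n : ℕ) (x₀ : EuclideanSpace ℝ (Fin n)) (r : ℝ) : Set (EuclideanSpace ℝ (Fin n)) :=
  {y | ‖x₀‖ - r < ‖y‖ ∧ ‖y‖ < ‖x₀‖ + r}

/-- A majorant for the Hardy operator of an atom. -/
noncomputable def maj (n : ℕ) (x₀ : EuclideanSpace ℝ (Fin n)) (r : ℝ)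
    (y : EuclideanSpace ℝ (Fin n)) : ENNReal :=
  (annS n x₀ r).indicator
    (fun y => ENNReal.ofReal (min (ballVol n 1 * r ^ n)⁻¹ (ballVol n 1 * ‖y‖ ^ n)⁻¹)) y

lemma annS_measurableSet (x₀ : EuclideanSpace ℝ (Fin n)) (r : ℝ) :
    MeasurableSet (annS n x₀ r) := by
  have h : annS n x₀ r = (fun y : EuclideanSpace ℝ (Fin n) => ‖y‖) ⁻¹'
      (Set.Ioo (‖x₀‖ - r) (‖x₀‖ + r)) := rfl
  rw [h]
  exact measurable_norm measurableSet_Ioo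

lemma maj_measurable (x₀ : EuclideanSpace ℝ (Fin n)) (r : ℝ) :
    Measurable (maj n x₀ r) := by
  apply Measurable.indicator _ (annS_measurableSet x₀ r)
  apply ENNReal.measurable_ofReal.comp
  exact (measurable_const.min (((measurable_norm.pow_const n).const_mul _).inv))

lemma ballVol_pos (hn : 0 < n) : 0 < ballVol n 1 :=
  ENNReal.toReal_pos (measure_ball_pos volume _ one_pos).ne' measure_ball_lt_top.ne

lemma nontrivial_euclidean (hn : 0 < n) : Nontrivial (EuclideanSpace ℝ (Fin n)) :=
  Module.nontrivial_of_finrank_pos (R := ℝ) (by rw [finrank_euclideanSpace_fin]; exact hn)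

lemma volume_ball_eq (hn : 0 < n) (x₀ : EuclideanSpace ℝ (Fin n)) {s : ℝ} (hs : 0 ≤ s) :
    (volume (ball x₀ s)).toReal = ballVol n 1 * s ^ n := by
  haveI := nontrivial_euclidean hn
  rw [Measure.addHaar_ball volume x₀ hs, finrank_euclideanSpace_fin, ENNReal.toReal_mul,
    ENNReal.toReal_ofReal (pow_nonneg hs n)]
  rw [ballVol]; ring

lemma volume_ball_eq' (hn : 0 < n) (x₀ : EuclideanSpace ℝ (Fin n)) {s : ℝ} (hs : 0 ≤ s) :
    volume (ball x₀ s) = ENNReal.ofReal (ballVol n 1 * s ^ n) := by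
  rw [← volume_ball_eq hn x₀ hs, ENNReal.ofReal_toReal measure_ball_lt_top.ne]

variable {x₀ : EuclideanSpace ℝ (Fin n)} {r : ℝ} {a : EuclideanSpace ℝ (Fin n) → ℝ}

lemma atom_abs_le (hn : 0 < n) (hr : 0 < r) (hA : IsAtomInfZero n x₀ r a) :
    ∀ y, |a y| ≤ (ballVol n 1 * r ^ n)⁻¹ := by
  intro y
  have := hA.2.2.1 y
  rwa [volume_ball_eq hn x₀ hr.le] at this

lemma atom_lintegral_le (hn : 0 < n) (hr : 0 < r) (hA : IsAtomInfZero n x₀ r a)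
    (s : Set (EuclideanSpace ℝ (Fin n))) :
    ∫⁻ y in s, ‖a y‖₊ ∂volume ≤ 1 := by
  have hvB : 0 < ballVol n 1 * r ^ n := mul_pos (ballVol_pos hn) (pow_pos hr n)
  have hpt : ∀ y, (‖a y‖₊ : ENNReal) ≤
      (ball x₀ r).indicator (fun _ => ENNReal.ofReal (ballVol n 1 * r ^ n)⁻¹) y := by
    intro y
    by_cases hy : y ∈ ball x₀ r
    · rw [Set.indicator_of_mem hy, ← enorm_eq_nnnorm, Real.enorm_eq_ofReal_abs]
      exact ENNReal.ofReal_le_ofReal (atom_abs_le hn hr hA y)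
    · simp [Set.indicator_of_notMem hy, hA.2.1 y hy]
  calc ∫⁻ y in s, ‖a y‖₊ ∂volume
      ≤ ∫⁻ y in s, (ball x₀ r).indicator
          (fun _ => ENNReal.ofReal (ballVol n 1 * r ^ n)⁻¹) y ∂volume :=
        lintegral_mono hpt
    _ ≤ ∫⁻ y, (ball x₀ r).indicator
          (fun _ => ENNReal.ofReal (ballVol n 1 * r ^ n)⁻¹) y ∂volume :=
        setLIntegral_le_lintegral _ _
    _ = ENNReal.ofReal (ballVol n 1 * r ^ n)⁻¹ * volume (ball x₀ r) := by
        rw [lintegral_indicator measurableSet_ball, setLIntegral_const]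
    _ = 1 := by
        rw [volume_ball_eq' hn x₀ hr.le,
          ← ENNReal.ofReal_mul (inv_nonneg.2 hvB.le), inv_mul_cancel₀ hvB.ne',
          ENNReal.ofReal_one]

lemma atom_integrable (hn : 0 < n) (hr : 0 < r) (hA : IsAtomInfZero n x₀ r a) :
    Integrable a volume := by
  have h1 : IntegrableOn a (ball x₀ r) volume := by
    refine Integrable.mono' (g := fun _ => (ballVol n 1 * r ^ n)⁻¹)
      (integrableOn_const measure_ball_lt_top.ne)
      (hA.1.aestronglyMeasurable.restrict)
      (Filter.Eventually.of_forall fun y => ?_)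
    rw [Real.norm_eq_abs]; exact atom_abs_le hn hr hA y
  have hind : (ball x₀ r).indicator a = a :=
    Set.indicator_eq_self.2 (fun y hy => by
      by_contra h; exact hy (hA.2.1 y h))
  rw [← hind]
  exact h1.integrable_indicator measurableSet_ball

/-- absolute value of integrals of atoms over any set are at most 1 -/
lemma atom_setIntegral_abs_le_one (hn : 0 < n) (hr : 0 < r) (hA : IsAtomInfZero n x₀ r a)
    (s : Set (EuclideanSpace ℝ (Fin n))) :
    |∫ y in s, a y ∂volume| ≤ 1 := by
  have hInt := atom_integrable hn hr hA
  have h1 : |∫ y in s, a y ∂volume| ≤ ∫ y in s, |a y| ∂volume := by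
    simpa [Real.norm_eq_abs] using norm_integral_le_integral_norm (μ := volume.restrict s) a
  refine h1.trans ?_
  have h2 : ∫ y in s, |a y| ∂volume ≤ ∫ y, |a y| ∂volume :=
    setIntegral_le_integral hInt.abs (Filter.Eventually.of_forall fun y => abs_nonneg _)
  refine h2.trans ?_
  have h3 : ∫ y, |a y| ∂volume = ∫ y in ball x₀ r, |a y| ∂volume :=
    (setIntegral_eq_integral_of_forall_compl_eq_zero
      (fun y hy => by rw [hA.2.1 y hy, abs_zero])).symm
  rw [h3]
  have hvB : 0 < ballVol n 1 * r ^ n := mul_pos (ballVol_pos hn) (pow_pos hr n)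
  calc ∫ y in ball x₀ r, |a y| ∂volume
      ≤ ∫ _ in ball x₀ r, (ballVol n 1 * r ^ n)⁻¹ ∂volume :=
        setIntegral_mono_on hInt.abs.integrableOn
          (integrableOn_const measure_ball_lt_top.ne) measurableSet_ball
          (fun y _ => atom_abs_le hn hr hA y)
    _ = (volume (ball x₀ r)).toReal * (ballVol n 1 * r ^ n)⁻¹ := by
        rw [setIntegral_const]; rfl
    _ = 1 := by
        rw [volume_ball_eq hn x₀ hr.le]; exact mul_inv_cancel₀ hvB.ne'

lemma atom_setIntegral_abs_le_vol (hr : 0 < r) (hA : IsAtomInfZero n x₀ r a)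
    (s : Set (EuclideanSpace ℝ (Fin n))) (hs : volume s < ⊤) :
    |∫ y in s, a y ∂volume| ≤
      (volume s).toReal * ((volume (ball x₀ r)).toReal)⁻¹ := by
  have h1 : |∫ y in s, a y ∂volume| ≤ ∫ y in s, |a y| ∂volume := by
    simpa [Real.norm_eq_abs] using norm_integral_le_integral_norm (μ := volume.restrict s) a
  refine h1.trans ?_
  calc ∫ y in s, |a y| ∂volume
      ≤ ∫ _ in s, ((volume (ball x₀ r)).toReal)⁻¹ ∂volume := by
        refine integral_mono ?_ (integrableOn_const hs.ne)
          (fun y => hA.2.2.1 y)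
        refine Integrable.mono' (g := fun _ => ((volume (ball x₀ r)).toReal)⁻¹)
          (integrableOn_const hs.ne)
          (hA.1.abs.aestronglyMeasurable.restrict)
          (Filter.Eventually.of_forall fun y => ?_)
        rw [Real.norm_eq_abs, abs_abs]; exact hA.2.2.1 y
    _ = (volume s).toReal * ((volume (ball x₀ r)).toReal)⁻¹ := by
        rw [setIntegral_const]; rfl

lemma atom_vanish_small (hr : 0 < r) (hA : IsAtomInfZero n x₀ r a)
    {t : ℝ} (ht : t ≤ ‖x₀‖ - r) :
    ∫ y in ball (0 : EuclideanSpace ℝ (Fin n)) t, a y ∂volume = 0 := by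
  have h : Set.EqOn a (fun _ => (0 : ℝ)) (ball (0 : EuclideanSpace ℝ (Fin n)) t) := by
    intro y hy
    rw [mem_ball, dist_zero_right] at hy
    refine hA.2.1 y (fun hmem => ?_)
    rw [mem_ball, dist_eq_norm] at hmem
    have h1 : ‖x₀‖ ≤ ‖y - x₀‖ + ‖y‖ := by
      have h := norm_add_le (x₀ - y) y
      rw [sub_add_cancel, norm_sub_rev] at h
      exact h
    linarith
  rw [setIntegral_congr_fun measurableSet_ball h, integral_const, smul_zero]

lemma atom_vanish_large (hn : 0 < n) (hr : 0 < r) (hA : IsAtomInfZero n x₀ r a)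
    {t : ℝ} (ht : ‖x₀‖ + r ≤ t) :
    ∫ y in ball (0 : EuclideanSpace ℝ (Fin n)) t, a y ∂volume = 0 := by
  have h : ∀ y, y ∉ ball (0 : EuclideanSpace ℝ (Fin n)) t → a y = 0 := by
    intro y hy
    rw [mem_ball, dist_zero_right, not_lt] at hy
    refine hA.2.1 y (fun hmem => ?_)
    rw [mem_ball, dist_eq_norm] at hmem
    have h1 : ‖y‖ ≤ ‖y - x₀‖ + ‖x₀‖ := by
      simpa using norm_add_le (y - x₀) x₀
    linarith
  rw [setIntegral_eq_integral_of_forall_compl_eq_zero h, hA.2.2.2]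

lemma atom_hardy_bound (hn : 0 < n) (hr : 0 < r) (hA : IsAtomInfZero n x₀ r a)
    (x : EuclideanSpace ℝ (Fin n)) :
    ENNReal.ofReal |hardyOp n a x| ≤ maj n x₀ r x := by
  have hv : 0 < ballVol n 1 := ballVol_pos hn
  by_cases hx0 : ‖x‖ = 0
  · have hb : ball (0 : EuclideanSpace ℝ (Fin n)) ‖x‖ = ∅ := by
      rw [hx0]; exact ball_zero
    have : hardyOp n a x = 0 := by
      rw [hardyOp, hb]; simp
    simp [this]
  · have ht : 0 < ‖x‖ := (norm_nonneg x).lt_of_ne (Ne.symm hx0)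
    have hvt : 0 < ballVol n 1 * ‖x‖ ^ n := mul_pos hv (pow_pos ht n)
    by_cases hxS : x ∈ annS n x₀ r
    · rw [maj, Set.indicator_of_mem hxS]
      apply ENNReal.ofReal_le_ofReal
      rw [hardyOp, abs_mul, abs_of_nonneg (inv_nonneg.2 hvt.le)]
      refine le_min ?_ ?_
      · have h2 := atom_setIntegral_abs_le_vol hr hA
          (ball (0 : EuclideanSpace ℝ (Fin n)) ‖x‖) measure_ball_lt_top
        rw [volume_ball_eq hn _ (norm_nonneg x), volume_ball_eq hn x₀ hr.le] at h2
        calc (ballVol n 1 * ‖x‖ ^ n)⁻¹ * |∫ y in ball (0 : EuclideanSpace ℝ (Fin n)) ‖x‖, a y|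
            ≤ (ballVol n 1 * ‖x‖ ^ n)⁻¹ *
              (ballVol n 1 * ‖x‖ ^ n * (ballVol n 1 * r ^ n)⁻¹) :=
              mul_le_mul_of_nonneg_left h2 (inv_nonneg.2 hvt.le)
          _ = (ballVol n 1 * r ^ n)⁻¹ := by
              rw [← mul_assoc, inv_mul_cancel₀ hvt.ne', one_mul]
      · calc (ballVol n 1 * ‖x‖ ^ n)⁻¹ * |∫ y in ball (0 : EuclideanSpace ℝ (Fin n)) ‖x‖, a y|
            ≤ (ballVol n 1 * ‖x‖ ^ n)⁻¹ * 1 :=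
              mul_le_mul_of_nonneg_left
                (atom_setIntegral_abs_le_one hn hr hA _) (inv_nonneg.2 hvt.le)
          _ = (ballVol n 1 * ‖x‖ ^ n)⁻¹ := mul_one _
    · rw [maj, Set.indicator_of_notMem hxS]
      have hI : ∫ y in ball (0 : EuclideanSpace ℝ (Fin n)) ‖x‖, a y ∂volume = 0 := by
        rw [annS, Set.mem_setOf_eq, not_and_or, not_lt, not_lt] at hxS
        rcases hxS with h | h
        · exact atom_vanish_small hr hA h
        · exact atom_vanish_large hn hr hA h
      rw [hardyOp, hI, mul_zero, abs_zero, ENNReal.ofReal_zero]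

lemma maj_lintegral_le (hn : 0 < n) (hr : 0 < r) (x₀ : EuclideanSpace ℝ (Fin n)) :
    ∫⁻ x, maj n x₀ r x ∂volume ≤ ENNReal.ofReal ((3 : ℝ) ^ n) := by
  have hv : 0 < ballVol n 1 := ballVol_pos hn
  set Mb : ℝ := max r (‖x₀‖ - r) with hMbdef
  have hMb : 0 < Mb := lt_max_of_lt_left hr
  have hvM : 0 < ballVol n 1 * Mb ^ n := mul_pos hv (pow_pos hMb n)
  have hsub : annS n x₀ r ⊆ ball (0 : EuclideanSpace ℝ (Fin n)) (3 * Mb) := by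
    intro y hy
    rw [mem_ball, dist_zero_right]
    have h1 : ‖y‖ < ‖x₀‖ + r := hy.2
    have h2 : ‖x₀‖ - r ≤ Mb := le_max_right _ _
    have h3 : r ≤ Mb := le_max_left _ _
    linarith
  have hub : ∀ y ∈ annS n x₀ r,
      ENNReal.ofReal (min (ballVol n 1 * r ^ n)⁻¹ (ballVol n 1 * ‖y‖ ^ n)⁻¹) ≤
        ENNReal.ofReal (ballVol n 1 * Mb ^ n)⁻¹ := by
    intro y hy
    apply ENNReal.ofReal_le_ofReal
    rcases max_cases r (‖x₀‖ - r) with ⟨hmax, _⟩ | ⟨hmax, hle⟩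
    · rw [← hMbdef] at hmax
      exact (min_le_left _ _).trans (by rw [hmax])
    · rw [← hMbdef] at hmax
      refine (min_le_right _ _).trans ?_
      have hyn : Mb ≤ ‖y‖ := by rw [hmax]; exact hy.1.le
      have : ballVol n 1 * Mb ^ n ≤ ballVol n 1 * ‖y‖ ^ n :=
        mul_le_mul_of_nonneg_left (pow_le_pow_left₀ hMb.le hyn n) hv.le
      exact inv_anti₀ hvM this
  calc ∫⁻ x, maj n x₀ r x ∂volume
      = ∫⁻ x in annS n x₀ r,
          ENNReal.ofReal (min (ballVol n 1 * r ^ n)⁻¹ (ballVol n 1 * ‖x‖ ^ n)⁻¹) ∂volume := by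
        simp only [maj]
        exact lintegral_indicator (annS_measurableSet x₀ r) _
    _ ≤ ∫⁻ _ in annS n x₀ r, ENNReal.ofReal (ballVol n 1 * Mb ^ n)⁻¹ ∂volume :=
        setLIntegral_mono measurable_const hub
    _ = ENNReal.ofReal (ballVol n 1 * Mb ^ n)⁻¹ * volume (annS n x₀ r) :=
        setLIntegral_const _ _
    _ ≤ ENNReal.ofReal (ballVol n 1 * Mb ^ n)⁻¹ *
          volume (ball (0 : EuclideanSpace ℝ (Fin n)) (3 * Mb)) :=
        mul_le_mul_right (measure_mono hsub) _
    _ = ENNReal.ofReal ((3 : ℝ) ^ n) := by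
        rw [volume_ball_eq' hn _ (by positivity : (0:ℝ) ≤ 3 * Mb),
          ← ENNReal.ofReal_mul (inv_nonneg.2 hvM.le)]
        congr 1
        rw [mul_pow]
        field_simp

lemma enn_abs_tsum_le (g : ℕ → ℝ) :
    ENNReal.ofReal |∑' k, g k| ≤ ∑' k, ENNReal.ofReal |g k| := by
  by_cases h : Summable g
  · have h1 : ENNReal.ofReal |∑' k, g k| ≤ ENNReal.ofReal (∑' k, |g k|) := by
      apply ENNReal.ofReal_le_ofReal
      simpa [Real.norm_eq_abs] using norm_tsum_le_tsum_norm (f := g)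
        (by simpa [Real.norm_eq_abs] using h.abs)
    have h2 : ENNReal.ofReal (∑' k, |g k|) = ∑' k, ENNReal.ofReal |g k| :=
      ENNReal.ofReal_tsum_of_nonneg (fun _ => abs_nonneg _) h.abs
    exact h1.trans (le_of_eq h2)
  · simp [tsum_eq_zero_of_not_summable h]

end Aux

/-- The Hardy operator maps the atomic Hardy space `H¹(ℝⁿ)` boundedly into `L¹(ℝⁿ)`:
there is `C > 0` such that whenever `f = Σ λₖ aₖ` with `(1,∞,0)`-atoms `aₖ` and
`Σ|λₖ| < ∞`, one has `‖ℋf‖_{L¹} ≤ C · Σ|λₖ|`; taking the infimum over atomic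
decompositions, `‖ℋf‖_{L¹} ≤ C ‖f‖_{H¹}`. -/
theorem hardy_H1_to_L1 (n : ℕ) (hn : 0 < n) :
    ∃ C : ℝ, 0 < C ∧ ∀ (f : EuclideanSpace ℝ (Fin n) → ℝ) (lam : ℕ → ℝ)
      (a : ℕ → EuclideanSpace ℝ (Fin n) → ℝ) (c : ℕ → EuclideanSpace ℝ (Fin n))
      (r : ℕ → ℝ), (∀ k, 0 < r k) → (∀ k, IsAtomInfZero n (c k) (r k) (a k)) →
      Summable (fun k => |lam k|) → (∀ x, f x = ∑' k, lam k * a k x) →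
      eLpNorm (hardyOp n f) 1 volume ≤ ENNReal.ofReal (C * ∑' k, |lam k|) := by
  refine ⟨(3 : ℝ) ^ n, by positivity, ?_⟩
  intro f lam a c r hr hA hsum hf
  have hlam_tsum : ∑' k, ENNReal.ofReal |lam k| = ENNReal.ofReal (∑' k, |lam k|) :=
    (ENNReal.ofReal_tsum_of_nonneg (fun _ => abs_nonneg _) hsum).symm
  have hlam_ne_top : ∑' k, ENNReal.ofReal |lam k| ≠ ⊤ := by
    rw [hlam_tsum]; exact ENNReal.ofReal_ne_top
  have hswap : ∀ x : EuclideanSpace ℝ (Fin n),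
      hardyOp n f x = ∑' k, lam k * hardyOp n (a k) x := by
    intro x
    have hmeas : ∀ k, AEStronglyMeasurable (fun y => lam k * a k y)
        (volume.restrict (ball (0 : EuclideanSpace ℝ (Fin n)) ‖x‖)) :=
      fun k => ((hA k).1.const_mul _).aestronglyMeasurable.restrict
    have hfin : ∑' k, ∫⁻ y in ball (0 : EuclideanSpace ℝ (Fin n)) ‖x‖,
        ‖lam k * a k y‖₊ ∂volume ≠ ⊤ := by
      refine ne_top_of_le_ne_top hlam_ne_top (ENNReal.tsum_le_tsum fun k => ?_)
      have he : ∀ y : EuclideanSpace ℝ (Fin n), (‖lam k * a k y‖₊ : ENNReal) =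
          ENNReal.ofReal |lam k| * (‖a k y‖₊ : ENNReal) := by
        intro y
        rw [← enorm_eq_nnnorm, Real.enorm_eq_ofReal_abs (lam k * a k y), abs_mul,
          ENNReal.ofReal_mul (abs_nonneg _), ← enorm_eq_nnnorm, Real.enorm_eq_ofReal_abs (a k y)]
      calc ∫⁻ y in ball (0 : EuclideanSpace ℝ (Fin n)) ‖x‖, ‖lam k * a k y‖₊ ∂volume
          = ENNReal.ofReal |lam k| *
            ∫⁻ y in ball (0 : EuclideanSpace ℝ (Fin n)) ‖x‖, ‖a k y‖₊ ∂volume := by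
            simp_rw [he]
            exact lintegral_const_mul _ ((hA k).1.nnnorm.coe_nnreal_ennreal)
        _ ≤ ENNReal.ofReal |lam k| * 1 :=
            mul_le_mul_right (atom_lintegral_le hn (hr k) (hA k) _) _
        _ = ENNReal.ofReal |lam k| := mul_one _
    have hint : (∫ y in ball (0 : EuclideanSpace ℝ (Fin n)) ‖x‖, f y ∂volume)
        = ∑' k, lam k * ∫ y in ball (0 : EuclideanSpace ℝ (Fin n)) ‖x‖, a k y ∂volume := by
      have h1 : (∫ y in ball (0 : EuclideanSpace ℝ (Fin n)) ‖x‖, f y ∂volume)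
          = ∫ y in ball (0 : EuclideanSpace ℝ (Fin n)) ‖x‖,
              (∑' k, lam k * a k y) ∂volume := by
        apply integral_congr_ae
        filter_upwards with y using hf y
      rw [h1, integral_tsum hmeas hfin]
      exact tsum_congr fun k => integral_const_mul _ _
    rw [hardyOp, hint, ← tsum_mul_left]
    refine tsum_congr fun k => ?_
    rw [hardyOp]; ring
  have hpt : ∀ x, (‖hardyOp n f x‖₊ : ENNReal) ≤
      ∑' k, ENNReal.ofReal |lam k| * maj n (c k) (r k) x := by
    intro x
    rw [← enorm_eq_nnnorm, Real.enorm_eq_ofReal_abs, hswap x]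
    refine (enn_abs_tsum_le _).trans (ENNReal.tsum_le_tsum fun k => ?_)
    rw [abs_mul, ENNReal.ofReal_mul (abs_nonneg _)]
    exact mul_le_mul_right (atom_hardy_bound hn (hr k) (hA k) x) _
  rw [eLpNorm_one_eq_lintegral_enorm]
  calc ∫⁻ x, (‖hardyOp n f x‖₊ : ENNReal) ∂volume
      ≤ ∫⁻ x, ∑' k, ENNReal.ofReal |lam k| * maj n (c k) (r k) x ∂volume :=
        lintegral_mono hpt
    _ = ∑' k, ∫⁻ x, ENNReal.ofReal |lam k| * maj n (c k) (r k) x ∂volume :=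
        lintegral_tsum fun k => ((maj_measurable (c k) (r k)).const_mul _).aemeasurable
    _ = ∑' k, ENNReal.ofReal |lam k| * ∫⁻ x, maj n (c k) (r k) x ∂volume :=
        tsum_congr fun k => lintegral_const_mul _ (maj_measurable (c k) (r k))
    _ ≤ ∑' k, ENNReal.ofReal |lam k| * ENNReal.ofReal ((3 : ℝ) ^ n) :=
        ENNReal.tsum_le_tsum fun k => mul_le_mul_right (maj_lintegral_le hn (hr k) (c k)) _
    _ = (∑' k, ENNReal.ofReal |lam k|) * ENNReal.ofReal ((3 : ℝ) ^ n) :=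
        ENNReal.tsum_mul_right
    _ = ENNReal.ofReal ((3 : ℝ) ^ n * ∑' k, |lam k|) := by
        rw [hlam_tsum, ← ENNReal.ofReal_mul (tsum_nonneg fun _ => abs_nonneg _), mul_comm]
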